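/- Let θ : F(a,b) → F(a,b) be the endomorphism of the free group on two generators determined by θ(a) = ab and θ(b) = ba, and let |·| denote the length of the reduced word representing an element of F(a,b). Then |θ(w)| = 2·|w| for every w ∈ F(a,b). -/

import Mathlib

/-- The endomorphism `θ` of the free group `F(a,b)` (with `a = of true`, `b = of false`)
determined by `θ(a) = ab` and `θ(b) = ba`. -/
def θ : FreeGroup Bool →* FreeGroup Bool :=
  FreeGroup.lift fun x : Bool =>
    if x then FreeGroup.of true * FreeGroup.of false
    else FreeGroup.of false * FreeGroup.of true

namespace Stmt16

/-- Image of a single letter under θ, as a 2-letter word. -/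
def im (x : Bool × Bool) : List (Bool × Bool) :=
  if x.2 then [(x.1, true), (!x.1, true)] else [(!x.1, false), (x.1, false)]

/-- The non-cancellation relation between adjacent letters. -/
def R (x y : Bool × Bool) : Prop := ¬(x.1 = y.1 ∧ x.2 = !y.2)

instance (x y : Bool × Bool) : Decidable (R x y) := by unfold R; infer_instance

lemma im_length (x : Bool × Bool) : (im x).length = 2 := by
  unfold im; split <;> rfl

lemma chain_im (x : Bool × Bool) : List.Chain' R (im x) := by
  rcases x with ⟨a, b⟩; cases a <;> cases b <;> simp [im, R, List.Chain', List.isChain_cons_cons]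

lemma reduce_eq_of_chain : ∀ L : List (Bool × Bool), List.Chain' R L →
    FreeGroup.reduce L = L
  | [], _ => rfl
  | x :: L, h => by
    have ih := reduce_eq_of_chain L h.tail
    rw [FreeGroup.reduce.cons, ih]
    cases L with
    | nil => rfl
    | cons hd tl =>
      have hR : R x hd := (List.isChain_cons_cons.mp h).1
      simp only [R] at hR
      simp [hR]

lemma chain_of_reduce : ∀ L : List (Bool × Bool), FreeGroup.reduce L = L →
    List.Chain' R L
  | [], _ => List.isChain_nil
  | x :: L, h => by
    rw [FreeGroup.reduce.cons] at h
    cases hr : FreeGroup.reduce L with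
    | nil =>
      rw [hr] at h
      simp only at h
      have : L = [] := by injection h with _ h2; exact h2.symm
      subst this; exact List.isChain_singleton x
    | cons hd tl =>
      rw [hr] at h
      simp only at h
      split_ifs at h with hc
      · exfalso
        have hsub : List.Sublist (FreeGroup.reduce L) L :=
          FreeGroup.Red.sublist FreeGroup.reduce.red
        have hlen : (FreeGroup.reduce L).length ≤ L.length := hsub.length_le
        rw [hr] at hlen
        have h2 : tl.length = L.length + 1 := by rw [h]; rfl
        simp only [List.length_cons] at hlen
        omega
      · have hL : L = hd :: tl := by injection h with _ h2; exact h2.symm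
        have hredL : FreeGroup.reduce L = L := by rw [hr, hL]
        have ih := chain_of_reduce L hredL
        subst hL
        exact List.isChain_cons_cons.mpr ⟨hc, ih⟩

lemma boundary : ∀ x y : Bool × Bool, R x y →
    R ((im x).getLast (by unfold im; split <;> simp))
      ((im y).head (by unfold im; split <;> simp)) := by decide

lemma chain_bind : ∀ L : List (Bool × Bool), List.Chain' R L →
    List.Chain' R (L.flatMap im)
  | [], _ => List.isChain_nil
  | [x], _ => by simpa using chain_im x
  | x :: y :: L, h => by
    have ih := chain_bind (y :: L) h.tail
    have hxy : R x y := (List.isChain_cons_cons.mp h).1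
    show List.Chain' R (im x ++ (y :: L).flatMap im)
    unfold List.Chain'; rw [List.isChain_append]
    refine ⟨chain_im x, ih, ?_⟩
    intro p hp q hq
    have hplast : p = (im x).getLast (by unfold im; split <;> simp) := by
      rcases x with ⟨a, b⟩; cases a <;> cases b <;> simp [im] at hp ⊢ <;> simp [hp]
    have hqhead : q = (im y).head (by unfold im; split <;> simp) := by
      have : (y :: L).flatMap im = im y ++ L.flatMap im := rfl
      rw [this] at hq
      rcases y with ⟨c, d⟩ <;> cases c <;> cases d <;>
        simp [im, List.head?_append] at hq ⊢ <;> simp [hq]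
    rw [hplast, hqhead]
    exact boundary x y hxy

lemma theta_mk : ∀ L : List (Bool × Bool), θ (FreeGroup.mk L) = FreeGroup.mk (L.flatMap im)
  | [] => by
    show θ 1 = FreeGroup.mk []
    rw [map_one, FreeGroup.one_eq_mk]
  | x :: L => by
    have : FreeGroup.mk (x :: L) = FreeGroup.mk [x] * FreeGroup.mk L := by
      rw [FreeGroup.mul_mk]; rfl
    rw [this, map_mul, theta_mk L]
    have hx : θ (FreeGroup.mk [x]) = FreeGroup.mk (im x) := by
      rcases x with ⟨a, b⟩
      cases a <;> cases b <;>
        · show FreeGroup.lift _ (FreeGroup.mk _) = _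
          rw [FreeGroup.lift_mk]
          simp [im, FreeGroup.one_eq_mk, FreeGroup.mul_mk, FreeGroup.inv_mk, FreeGroup.invRev]
          rfl
    rw [hx, FreeGroup.mul_mk]
    rfl

end Stmt16

/-- For the endomorphism `θ` of `F(a,b)` with `θ(a) = ab`, `θ(b) = ba`, the
reduced word length of `θ(w)` is exactly twice that of `w`, for every `w ∈ F(a,b)`. -/
theorem stmt_16 (w : FreeGroup Bool) : FreeGroup.norm (θ w) = 2 * FreeGroup.norm w := by
  have h1 : θ w = FreeGroup.mk ((FreeGroup.toWord w).flatMap Stmt16.im) := by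
    conv_lhs => rw [← FreeGroup.mk_toWord (x := w)]
    exact Stmt16.theta_mk _
  have hchain := Stmt16.chain_of_reduce _ (FreeGroup.reduce_toWord w)
  have h2 := Stmt16.reduce_eq_of_chain _ (Stmt16.chain_bind _ hchain)
  unfold FreeGroup.norm
  rw [h1, FreeGroup.toWord_mk, h2, List.length_flatMap]
  have : List.map (fun a => (Stmt16.im a).length) w.toWord = List.map (fun _ => 2) w.toWord := by
    apply List.map_congr_left; intro x _; simp [Stmt16.im_length]
  rw [this, List.map_const', List.sum_replicate, smul_eq_mul]
  ring
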